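/- For every integer r ≥ 3 there exist 2r pairwise distinct real numbers a₁, …, a_{2r} with the following property: for all real numbers α, β, γ, δ with αδ − βγ ≠ 0, if for every i one has γ·aᵢ + δ ≠ 0 and (α·aᵢ + β)/(γ·aᵢ + δ) ∈ {a₁, …, a_{2r}}, then (α·aᵢ + β)/(γ·aᵢ + δ) = aᵢ for every i. In other words, there exists a set of 2r distinct points of the real line whose only Möbius symmetry is the identity. -/

import Mathlib

noncomputable def cr (w x y z : ℝ) : ℝ := ((w - y) * (x - z)) / ((w - z) * (x - y))

lemma cr_ne_zero {w x y z : ℝ} (hwy : w ≠ y) (hxz : x ≠ z) (hwz : w ≠ z) (hxy : x ≠ y) :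
    cr w x y z ≠ 0 :=
  div_ne_zero (mul_ne_zero (sub_ne_zero.2 hwy) (sub_ne_zero.2 hxz))
    (mul_ne_zero (sub_ne_zero.2 hwz) (sub_ne_zero.2 hxy))

lemma kl2 (w x y z : ℝ) : cr w x y z = cr x w z y := by unfold cr; congr 1 <;> ring
lemma kl3 (w x y z : ℝ) : cr w x y z = cr y z w x := by unfold cr; congr 1 <;> ring
lemma kl4 (w x y z : ℝ) : cr w x y z = cr z y x w := by unfold cr; congr 1 <;> ring

lemma mobius_inj {α β γ δ x y : ℝ} (hdet : α*δ - β*γ ≠ 0)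
    (hx : γ*x+δ ≠ 0) (hy : γ*y+δ ≠ 0)
    (hxy : (α*x+β)/(γ*x+δ) = (α*y+β)/(γ*y+δ)) : x = y := by
  have h1 := (div_eq_div_iff hx hy).mp hxy
  have h2 : (α*δ - β*γ) * (x - y) = 0 := by linear_combination h1
  rcases mul_eq_zero.mp h2 with h | h
  · exact absurd h hdet
  · linarith [sub_eq_zero.mp h]

lemma cr_mobius {α β γ δ w x y z : ℝ} (hdet : α*δ-β*γ ≠ 0)
    (hw : γ*w+δ ≠ 0) (hx : γ*x+δ ≠ 0) (hy : γ*y+δ ≠ 0) (hz : γ*z+δ ≠ 0)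
    (hwz : w ≠ z) (hxy : x ≠ y) :
    cr ((α*w+β)/(γ*w+δ)) ((α*x+β)/(γ*x+δ)) ((α*y+β)/(γ*y+δ)) ((α*z+β)/(γ*z+δ))
      = cr w x y z := by
  have hsub : ∀ u v : ℝ, γ*u+δ ≠ 0 → γ*v+δ ≠ 0 →
      (α*u+β)/(γ*u+δ) - (α*v+β)/(γ*v+δ) = ((α*δ-β*γ)*(u-v))/((γ*u+δ)*(γ*v+δ)) := by
    intro u v hu hv
    rw [div_sub_div _ _ hu hv]
    congr 1; ring
  unfold cr
  rw [hsub w y hw hy, hsub x z hx hz, hsub w z hw hz, hsub x y hx hy]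
  have h1 : (α*δ-β*γ)*(w-z) ≠ 0 := mul_ne_zero hdet (sub_ne_zero.2 hwz)
  have h2 : (α*δ-β*γ)*(x-y) ≠ 0 := mul_ne_zero hdet (sub_ne_zero.2 hxy)
  have h3 : (w-z) ≠ 0 := sub_ne_zero.2 hwz
  have h4 : (x-y) ≠ 0 := sub_ne_zero.2 hxy
  field_simp

lemma quad_eq_zero {A B C : ℝ} (h : {t : ℝ | A*t^2 + B*t + C = 0}.Infinite) :
    ∀ t : ℝ, A*t^2 + B*t + C = 0 := by
  obtain ⟨t1, ht1⟩ := h.nonempty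
  have h2 := h.diff (Set.finite_singleton t1)
  obtain ⟨t2, ht2⟩ := h2.nonempty
  have h3 := h.diff ((Set.finite_singleton t2).insert t1)
  obtain ⟨t3, ht3⟩ := h3.nonempty
  obtain ⟨e2, ht21⟩ := ht2
  obtain ⟨e3, ht3'⟩ := ht3
  simp only [Set.mem_singleton_iff, Set.mem_insert_iff] at ht21 ht3'
  push_neg at ht3'
  have e1 : A*t1^2 + B*t1 + C = 0 := ht1
  have e2 : A*t2^2 + B*t2 + C = 0 := e2
  have e3 : A*t3^2 + B*t3 + C = 0 := e3
  have d12 : t1 - t2 ≠ 0 := sub_ne_zero.2 (fun hh => ht21 hh.symm)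
  have d13 : t1 - t3 ≠ 0 := sub_ne_zero.2 (fun hh => ht3'.1 hh.symm)
  have d23 : t2 - t3 ≠ 0 := sub_ne_zero.2 (fun hh => ht3'.2 hh.symm)
  have f12 : (t1 - t2) * (A*(t1+t2) + B) = 0 := by linear_combination e1 - e2
  have f13 : (t1 - t3) * (A*(t1+t3) + B) = 0 := by linear_combination e1 - e3
  have g12 : A*(t1+t2) + B = 0 := by
    rcases mul_eq_zero.mp f12 with hh | hh
    · exact absurd hh d12
    · exact hh
  have g13 : A*(t1+t3) + B = 0 := by
    rcases mul_eq_zero.mp f13 with hh | hh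
    · exact absurd hh d13
    · exact hh
  have hA : A * (t2 - t3) = 0 := by linear_combination g12 - g13
  have hA0 : A = 0 := by
    rcases mul_eq_zero.mp hA with hh | hh
    · exact hh
    · exact absurd hh d23
  have hB0 : B = 0 := by rw [hA0] at g12; linarith
  have hC0 : C = 0 := by rw [hA0, hB0] at e1; linarith
  intro t; rw [hA0, hB0, hC0]; ring

lemma finite_bad_pair {x y z x' y' z' : ℝ}
    (hxy : x ≠ y) (hxz : x ≠ z) (hyz : y ≠ z)
    (hxy' : x' ≠ y') (hxz' : x' ≠ z') (hyz' : y' ≠ z')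
    (hne : ({x, y, z} : Finset ℝ) ≠ {x', y', z'}) :
    {t : ℝ | t ≠ x ∧ t ≠ y ∧ t ≠ z ∧ t ≠ x' ∧ t ≠ y' ∧ t ≠ z' ∧
      cr t x y z = cr t x' y' z'}.Finite := by
  by_contra hinf
  replace hinf : Set.Infinite _ := hinf
  set A : ℝ := (x-z)*(x'-y') - (x'-z')*(x-y) with hA
  set B : ℝ := (-(y+z'))*((x-z)*(x'-y')) + (y'+z)*((x'-z')*(x-y)) with hB
  set C : ℝ := y*z'*((x-z)*(x'-y')) - y'*z*((x'-z')*(x-y)) with hC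
  have hsub : {t : ℝ | t ≠ x ∧ t ≠ y ∧ t ≠ z ∧ t ≠ x' ∧ t ≠ y' ∧ t ≠ z' ∧
      cr t x y z = cr t x' y' z'} ⊆ {t : ℝ | A*t^2 + B*t + C = 0} := by
    intro t ⟨h1,h2,h3,h4,h5,h6,h7⟩
    have d1 : (t - z)*(x - y) ≠ 0 := mul_ne_zero (sub_ne_zero.2 h3) (sub_ne_zero.2 hxy)
    have d2 : (t - z')*(x' - y') ≠ 0 := mul_ne_zero (sub_ne_zero.2 h6) (sub_ne_zero.2 hxy')
    have h8 := (div_eq_div_iff d1 d2).mp h7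
    simp only [Set.mem_setOf_eq, hA, hB, hC]
    linear_combination h8
  have hq := quad_eq_zero (hinf.mono hsub)
  -- plug t = y : (y-y')*(y-z)*((x'-z')*(x-y)) = 0
  have py : (y - y') * ((y-z) * ((x'-z')*(x-y))) = 0 := by linear_combination -(hq y)
  have hyy' : y = y' := by
    rcases mul_eq_zero.mp py with hh | hh
    · linarith [sub_eq_zero.mp hh]
    · exfalso
      rcases mul_eq_zero.mp hh with hh2 | hh2
      · exact hyz (sub_eq_zero.mp hh2)
      · rcases mul_eq_zero.mp hh2 with hh3 | hh3
        · exact hxz' (sub_eq_zero.mp hh3)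
        · exact hxy (sub_eq_zero.mp hh3)
  have pz : (z' - y') * ((z'-z) * ((x'-z')*(x-y))) = 0 := by linear_combination -(hq z')
  have hzz' : z = z' := by
    rcases mul_eq_zero.mp pz with hh | hh
    · exact absurd (sub_eq_zero.mp hh) hyz'.symm
    · rcases mul_eq_zero.mp hh with hh2 | hh2
      · exact (sub_eq_zero.mp hh2).symm
      · exfalso
        rcases mul_eq_zero.mp hh2 with hh3 | hh3
        · exact hxz' (sub_eq_zero.mp hh3)
        · exact hxy (sub_eq_zero.mp hh3)
  -- now with y=y', z=z', leading coefficient A = (x-x')*(z-y)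
  have hAx : (x - x') * (z - y) = 0 := by
    have h1 := hq 0
    have h2 := hq 1
    have h3 := hq (-1)
    -- A = value relation: A*1 + B + C = 0, A - B + C = 0, C = 0 => A = -... derive A = 0
    have hA0 : A = 0 := by linarith
    rw [hA, ← hyy', ← hzz'] at hA0
    linear_combination hA0
  have hxx' : x = x' := by
    rcases mul_eq_zero.mp hAx with hh | hh
    · exact sub_eq_zero.mp hh
    · exact absurd (sub_eq_zero.mp hh).symm hyz
  exact hne (by rw [hxx', hyy', hzz'])

lemma finite_bad_single {x y z c : ℝ} (hxy : x ≠ y) (hxz : x ≠ z) (hyz : y ≠ z) (hc : c ≠ 0) :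
    {t : ℝ | t ≠ x ∧ t ≠ y ∧ t ≠ z ∧ cr t x y z = c}.Finite := by
  by_contra hinf
  replace hinf : Set.Infinite _ := hinf
  have hsub : {t : ℝ | t ≠ x ∧ t ≠ y ∧ t ≠ z ∧ cr t x y z = c} ⊆
      {t : ℝ | (0:ℝ)*t^2 + ((x-z) - c*(x-y))*t + (-(y*(x-z)) + c*z*(x-y)) = 0} := by
    intro t ⟨h1,h2,h3,h4⟩
    have d1 : (t - z)*(x - y) ≠ 0 := mul_ne_zero (sub_ne_zero.2 h3) (sub_ne_zero.2 hxy)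
    have h5 : (t-y)*(x-z) = c * ((t-z)*(x-y)) := by
      rw [cr] at h4
      field_simp at h4
      linarith [h4]
    simp only [Set.mem_setOf_eq]
    linear_combination h5
  have hq := quad_eq_zero (hinf.mono hsub)
  have py := hq y
  have : c * ((y-z)*(x-y)) = 0 := by linear_combination -py
  rcases mul_eq_zero.mp this with hh | hh
  · exact hc hh
  · rcases mul_eq_zero.mp hh with h2 | h2
    · exact hyz (sub_eq_zero.mp h2)
    · exact hxy (sub_eq_zero.mp h2)

def Dist3 {n : ℕ} (x y z : Fin n) : Prop := x ≠ y ∧ x ≠ z ∧ y ≠ z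
def Dist4 {n : ℕ} (i j k l : Fin n) : Prop :=
  i ≠ j ∧ i ≠ k ∧ i ≠ l ∧ j ≠ k ∧ j ≠ l ∧ k ≠ l

def Good {n : ℕ} (a : Fin n → ℝ) : Prop :=
  ∀ i j k l i' j' k' l' : Fin n, Dist4 i j k l → Dist4 i' j' k' l' →
    cr (a i) (a j) (a k) (a l) = cr (a i') (a j') (a k') (a l') →
    ({i, j, k, l} : Finset (Fin n)) = {i', j', k', l'}

lemma csne {n : ℕ} {u v : Fin n} (h : u.castSucc ≠ v.castSucc) : u ≠ v :=
  fun hh => h (by rw [hh])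

lemma snoc_norm {n : ℕ} (a : Fin n → ℝ) (t : ℝ) (b : Fin (n+1) → ℝ)
    (hb1 : ∀ m : Fin n, b m.castSucc = a m) (hb2 : b (Fin.last n) = t)
    (i j k l : Fin (n+1)) (h : Dist4 i j k l) :
    (∃ i₀ j₀ k₀ l₀ : Fin n, Dist4 i₀ j₀ k₀ l₀ ∧
      ({i, j, k, l} : Finset (Fin (n+1))) = {i₀.castSucc, j₀.castSucc, k₀.castSucc, l₀.castSucc} ∧
      cr (b i) (b j) (b k) (b l) = cr (a i₀) (a j₀) (a k₀) (a l₀)) ∨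
    (∃ x y z : Fin n, Dist3 x y z ∧
      ({i, j, k, l} : Finset (Fin (n+1))) = {Fin.last n, x.castSucc, y.castSucc, z.castSucc} ∧
      cr (b i) (b j) (b k) (b l) = cr t (a x) (a y) (a z)) := by
  obtain ⟨hij, hik, hil, hjk, hjl, hkl⟩ := h
  by_cases hi : i = Fin.last n
  · subst hi
    obtain ⟨j₀, rfl⟩ := Fin.eq_castSucc_of_ne_last (x := j) (fun hh => hij (hh ▸ rfl))
    obtain ⟨k₀, rfl⟩ := Fin.eq_castSucc_of_ne_last (x := k) (fun hh => hik (hh ▸ rfl))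
    obtain ⟨l₀, rfl⟩ := Fin.eq_castSucc_of_ne_last (x := l) (fun hh => hil (hh ▸ rfl))
    refine Or.inr ⟨j₀, k₀, l₀, ⟨csne hjk, csne hjl, csne hkl⟩, rfl, ?_⟩
    rw [hb1, hb1, hb1, hb2]
  by_cases hj : j = Fin.last n
  · subst hj
    obtain ⟨i₀, rfl⟩ := Fin.eq_castSucc_of_ne_last (x := i) hi
    obtain ⟨k₀, rfl⟩ := Fin.eq_castSucc_of_ne_last (x := k) (fun hh => hjk (hh ▸ rfl))
    obtain ⟨l₀, rfl⟩ := Fin.eq_castSucc_of_ne_last (x := l) (fun hh => hjl (hh ▸ rfl))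
    refine Or.inr ⟨i₀, l₀, k₀, ⟨csne hil, csne hik, csne hkl.symm⟩, ?_, ?_⟩
    · ext m; simp only [Finset.mem_insert, Finset.mem_singleton]; tauto
    · rw [hb1, hb1, hb1, hb2, kl2]
  by_cases hk : k = Fin.last n
  · subst hk
    obtain ⟨i₀, rfl⟩ := Fin.eq_castSucc_of_ne_last (x := i) hi
    obtain ⟨j₀, rfl⟩ := Fin.eq_castSucc_of_ne_last (x := j) hj
    obtain ⟨l₀, rfl⟩ := Fin.eq_castSucc_of_ne_last (x := l) (fun hh => hkl (hh ▸ rfl))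
    refine Or.inr ⟨l₀, i₀, j₀, ⟨csne hil.symm, csne hjl.symm, csne hij⟩, ?_, ?_⟩
    · ext m; simp only [Finset.mem_insert, Finset.mem_singleton]; tauto
    · rw [hb1, hb1, hb1, hb2, kl3]
  by_cases hl : l = Fin.last n
  · subst hl
    obtain ⟨i₀, rfl⟩ := Fin.eq_castSucc_of_ne_last (x := i) hi
    obtain ⟨j₀, rfl⟩ := Fin.eq_castSucc_of_ne_last (x := j) hj
    obtain ⟨k₀, rfl⟩ := Fin.eq_castSucc_of_ne_last (x := k) hk
    refine Or.inr ⟨k₀, j₀, i₀, ⟨csne hjk.symm, csne hik.symm, csne hij.symm⟩, ?_, ?_⟩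
    · ext m; simp only [Finset.mem_insert, Finset.mem_singleton]; tauto
    · rw [hb1, hb1, hb1, hb2, kl4]
  · obtain ⟨i₀, rfl⟩ := Fin.eq_castSucc_of_ne_last (x := i) hi
    obtain ⟨j₀, rfl⟩ := Fin.eq_castSucc_of_ne_last (x := j) hj
    obtain ⟨k₀, rfl⟩ := Fin.eq_castSucc_of_ne_last (x := k) hk
    obtain ⟨l₀, rfl⟩ := Fin.eq_castSucc_of_ne_last (x := l) hl
    refine Or.inl ⟨i₀, j₀, k₀, l₀,
      ⟨csne hij, csne hik, csne hil, csne hjk, csne hjl, csne hkl⟩, rfl, ?_⟩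
    rw [hb1, hb1, hb1, hb1]

lemma exists_good (n : ℕ) : ∃ a : Fin n → ℝ, Function.Injective a ∧ Good a := by
  induction n with
  | zero => exact ⟨Fin.elim0, fun i => i.elim0, fun i => i.elim0⟩
  | succ n ih =>
    classical
    obtain ⟨a, hinj, hgood⟩ := ih
    set B2 : Set ℝ := ⋃ x : Fin n, ⋃ y : Fin n, ⋃ z : Fin n, ⋃ x' : Fin n, ⋃ y' : Fin n, ⋃ z' : Fin n,
      {t : ℝ | Dist3 x y z ∧ Dist3 x' y' z' ∧ ({x, y, z} : Finset (Fin n)) ≠ {x', y', z'} ∧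
        t ≠ a x ∧ t ≠ a y ∧ t ≠ a z ∧ t ≠ a x' ∧ t ≠ a y' ∧ t ≠ a z' ∧
        cr t (a x) (a y) (a z) = cr t (a x') (a y') (a z')} with hB2def
    set B3 : Set ℝ := ⋃ x : Fin n, ⋃ y : Fin n, ⋃ z : Fin n, ⋃ i : Fin n, ⋃ j : Fin n,
      ⋃ k : Fin n, ⋃ l : Fin n,
      {t : ℝ | Dist3 x y z ∧ Dist4 i j k l ∧ t ≠ a x ∧ t ≠ a y ∧ t ≠ a z ∧
        cr t (a x) (a y) (a z) = cr (a i) (a j) (a k) (a l)} with hB3def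
    have hB2 : B2.Finite := by
      refine Set.finite_iUnion fun x => Set.finite_iUnion fun y => Set.finite_iUnion fun z =>
        Set.finite_iUnion fun x' => Set.finite_iUnion fun y' => Set.finite_iUnion fun z' => ?_
      by_cases h1 : Dist3 x y z ∧ Dist3 x' y' z' ∧ ({x, y, z} : Finset (Fin n)) ≠ {x', y', z'}
      · obtain ⟨⟨d1, d2, d3⟩, ⟨d4, d5, d6⟩, d7⟩ := h1
        have hv : ({a x, a y, a z} : Finset ℝ) ≠ {a x', a y', a z'} := by
          intro he
          apply d7
          apply Finset.image_injective hinj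
          simpa using he
        refine (finite_bad_pair (hinj.ne d1) (hinj.ne d2) (hinj.ne d3)
          (hinj.ne d4) (hinj.ne d5) (hinj.ne d6) hv).subset ?_
        rintro t ⟨-, -, -, h4, h5, h6, h7, h8, h9, h10⟩
        exact ⟨h4, h5, h6, h7, h8, h9, h10⟩
      · refine Set.finite_empty.subset ?_
        rintro t ⟨c1, c2, c3, -⟩
        exact absurd ⟨c1, c2, c3⟩ h1
    have hB3 : B3.Finite := by
      refine Set.finite_iUnion fun x => Set.finite_iUnion fun y => Set.finite_iUnion fun z =>
        Set.finite_iUnion fun i => Set.finite_iUnion fun j => Set.finite_iUnion fun k =>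
        Set.finite_iUnion fun l => ?_
      by_cases h1 : Dist3 x y z ∧ Dist4 i j k l
      · obtain ⟨⟨d1, d2, d3⟩, e1, e2, e3, e4, e5, e6⟩ := h1
        have hc : cr (a i) (a j) (a k) (a l) ≠ 0 :=
          cr_ne_zero (hinj.ne e2) (hinj.ne e5) (hinj.ne e3) (hinj.ne e4)
        refine (finite_bad_single (hinj.ne d1) (hinj.ne d2) (hinj.ne d3) hc).subset ?_
        rintro t ⟨-, -, h3, h4, h5, h6⟩
        exact ⟨h3, h4, h5, h6⟩
      · refine Set.finite_empty.subset ?_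
        rintro t ⟨c1, c2, -⟩
        exact absurd ⟨c1, c2⟩ h1
    have hBad : (Set.range a ∪ B2 ∪ B3).Finite :=
      ((Set.finite_range a).union hB2).union hB3
    obtain ⟨t, ht⟩ := hBad.infinite_compl.nonempty
    simp only [Set.mem_compl_iff, Set.mem_union, not_or] at ht
    obtain ⟨⟨htr, ht2⟩, ht3⟩ := ht
    have tne : ∀ u : Fin n, t ≠ a u := fun u he => htr ⟨u, he.symm⟩
    set b : Fin (n+1) → ℝ := Fin.snoc a t with hbdef
    have hb1 : ∀ m : Fin n, b m.castSucc = a m := by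
      intro m; rw [hbdef]; exact Fin.snoc_castSucc (α := fun _ => ℝ) t a m
    have hb2 : b (Fin.last n) = t := by rw [hbdef]; exact Fin.snoc_last (α := fun _ => ℝ) t a
    have hbinj : Function.Injective b := by
      intro u v huv
      by_cases hu : u = Fin.last n
      · by_cases hv : v = Fin.last n
        · rw [hu, hv]
        · exfalso
          obtain ⟨v₀, rfl⟩ := Fin.eq_castSucc_of_ne_last (x := v) hv
          rw [hu, hb2, hb1] at huv
          exact tne v₀ huv
      · obtain ⟨u₀, rfl⟩ := Fin.eq_castSucc_of_ne_last (x := u) hu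
        by_cases hv : v = Fin.last n
        · exfalso
          rw [hv, hb2, hb1] at huv
          exact tne u₀ huv.symm
        · obtain ⟨v₀, rfl⟩ := Fin.eq_castSucc_of_ne_last (x := v) hv
          rw [hb1, hb1] at huv
          rw [hinj huv]
    refine ⟨b, hbinj, ?_⟩
    intro i j k l i' j' k' l' h h' hcr
    rcases snoc_norm a t b hb1 hb2 i j k l h with
      ⟨i₀, j₀, k₀, l₀, hd, hset, hcrv⟩ | ⟨x, y, z, hd, hset, hcrv⟩
    · rcases snoc_norm a t b hb1 hb2 i' j' k' l' h' with
        ⟨i₀', j₀', k₀', l₀', hd', hset', hcrv'⟩ | ⟨x', y', z', hd', hset', hcrv'⟩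
      · have hg := hgood i₀ j₀ k₀ l₀ i₀' j₀' k₀' l₀' hd hd'
          (hcrv.symm.trans (hcr.trans hcrv'))
        rw [hset, hset']
        have h1 : Finset.image Fin.castSucc ({i₀, j₀, k₀, l₀} : Finset (Fin n)) =
            {i₀.castSucc, j₀.castSucc, k₀.castSucc, l₀.castSucc} := by
          simp [Finset.image_insert]
        have h2 : Finset.image Fin.castSucc ({i₀', j₀', k₀', l₀'} : Finset (Fin n)) =
            {i₀'.castSucc, j₀'.castSucc, k₀'.castSucc, l₀'.castSucc} := by
          simp [Finset.image_insert]
        rw [← h1, ← h2, hg]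
      · exfalso
        apply ht3
        rw [hB3def]
        simp only [Set.mem_iUnion]
        exact ⟨x', y', z', i₀, j₀, k₀, l₀,
          hd', hd, tne x', tne y', tne z',
          hcrv'.symm.trans (hcr.symm.trans hcrv)⟩
    · rcases snoc_norm a t b hb1 hb2 i' j' k' l' h' with
        ⟨i₀', j₀', k₀', l₀', hd', hset', hcrv'⟩ | ⟨x', y', z', hd', hset', hcrv'⟩
      · exfalso
        apply ht3
        rw [hB3def]
        simp only [Set.mem_iUnion]
        exact ⟨x, y, z, i₀', j₀', k₀', l₀',
          hd, hd', tne x, tne y, tne z,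
          hcrv.symm.trans (hcr.trans hcrv')⟩
      · by_cases hss : ({x, y, z} : Finset (Fin n)) = {x', y', z'}
        · rw [hset, hset']
          have h1 : Finset.image Fin.castSucc ({x, y, z} : Finset (Fin n)) =
              {x.castSucc, y.castSucc, z.castSucc} := by simp [Finset.image_insert]
          have h2 : Finset.image Fin.castSucc ({x', y', z'} : Finset (Fin n)) =
              {x'.castSucc, y'.castSucc, z'.castSucc} := by simp [Finset.image_insert]
          congr 1
          rw [← h1, ← h2, hss]
        · exfalso
          apply ht2
          rw [hB2def]
          simp only [Set.mem_iUnion]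
          exact ⟨x, y, z, x', y', z', hd, hd', hss,
            tne x, tne y, tne z, tne x', tne y', tne z',
            hcrv.symm.trans (hcr.trans hcrv')⟩

/-- For every `r ≥ 3` there exist `2r` pairwise distinct real numbers whose only
Möbius symmetry is the identity: any real Möbius transformation defined at all of
them and mapping each of them into the set must fix each of them. -/
theorem exists_mobius_rigid_tuple (r : ℕ) (hr : 3 ≤ r) :
    ∃ a : Fin (2 * r) → ℝ, Function.Injective a ∧
      ∀ α β γ δ : ℝ, α * δ - β * γ ≠ 0 →
        (∀ i, γ * a i + δ ≠ 0 ∧ (α * a i + β) / (γ * a i + δ) ∈ Set.range a) →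
        ∀ i, (α * a i + β) / (γ * a i + δ) = a i := by
  obtain ⟨a, hinj, hgood⟩ := exists_good (2 * r)
  refine ⟨a, hinj, ?_⟩
  intro α β γ δ hdet h i
  by_contra hne
  choose g hg using fun m => (h m).2
  have hginj : ∀ u v, g u = g v → u = v := by
    intro u v huv
    have he : (α * a u + β) / (γ * a u + δ) = (α * a v + β) / (γ * a v + δ) := by
      rw [← hg u, ← hg v, huv]
    exact hinj (mobius_inj hdet (h u).1 (h v).1 he)
  have hgne : g i ≠ i := fun he => hne (by rw [← hg i, he])
  have hcard : 3 ≤ (Finset.univ \ {i, g i} : Finset (Fin (2 * r))).card := by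
    have h1 : ({i, g i} : Finset (Fin (2 * r))).card ≤ 2 :=
      (Finset.card_insert_le _ _).trans (by simp)
    have h2 : (Finset.univ : Finset (Fin (2 * r))).card = 2 * r := by simp
    have h3 := Finset.le_card_sdiff ({i, g i} : Finset (Fin (2 * r))) Finset.univ
    omega
  obtain ⟨s, hs, hscard⟩ := Finset.exists_subset_card_eq hcard
  obtain ⟨j, k, l, hjk, hjl, hkl, rfl⟩ := Finset.card_eq_three.mp hscard
  have hj := hs (Finset.mem_insert_self _ _)
  have hk := hs (show k ∈ ({j, k, l} : Finset (Fin (2 * r))) by simp)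
  have hl := hs (show l ∈ ({j, k, l} : Finset (Fin (2 * r))) by simp)
  rw [Finset.mem_sdiff, Finset.mem_insert, Finset.mem_singleton] at hj hk hl
  push_neg at hj hk hl
  have hd : Dist4 i j k l := ⟨Ne.symm hj.2.1, Ne.symm hk.2.1, Ne.symm hl.2.1, hjk, hjl, hkl⟩
  have hd' : Dist4 (g i) (g j) (g k) (g l) :=
    ⟨fun he => hd.1 (hginj _ _ he), fun he => hd.2.1 (hginj _ _ he),
     fun he => hd.2.2.1 (hginj _ _ he), fun he => hd.2.2.2.1 (hginj _ _ he),
     fun he => hd.2.2.2.2.1 (hginj _ _ he), fun he => hd.2.2.2.2.2 (hginj _ _ he)⟩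
  have hcr : cr (a (g i)) (a (g j)) (a (g k)) (a (g l)) = cr (a i) (a j) (a k) (a l) := by
    rw [hg i, hg j, hg k, hg l]
    exact cr_mobius hdet (h i).1 (h j).1 (h k).1 (h l).1
      (hinj.ne hd.2.2.1) (hinj.ne hd.2.2.2.1)
  have hset := hgood (g i) (g j) (g k) (g l) i j k l hd' hd hcr
  have hmem : g i ∈ ({i, j, k, l} : Finset (Fin (2 * r))) := by
    rw [← hset]; exact Finset.mem_insert_self _ _
  rw [Finset.mem_insert, Finset.mem_insert, Finset.mem_insert, Finset.mem_singleton] at hmem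
  rcases hmem with he | he | he | he
  · exact hgne he
  · exact hj.2.2 he.symm
  · exact hk.2.2 he.symm
  · exact hl.2.2 he.symm
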